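/- Let A be a unital C*-algebra. If a, b ∈ A satisfy σ(a·x) = σ(b·x) for all x ∈ A, then a = b. -/

import Mathlib

/-- Key transfer lemma: if `σ(a x) = σ(b x)` for all `x`, `λ ≠ 0` and
`λ + b y` is invertible, then `λ + b y - a y` is invertible.
(Test with `x = y * (λ + b y)⁻¹`.) -/
lemma aux_isUnit_transfer
    {A : Type*} [NormedRing A] [StarRing A] [CStarRing A] [CompleteSpace A]
    [NormedAlgebra ℂ A] [StarModule ℂ A]
    (a b : A)
    (h : ∀ x : A, spectrum ℂ (a * x) = spectrum ℂ (b * x))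
    (y : A) (lam : ℂ) (hlam : lam ≠ 0)
    (hu : IsUnit (algebraMap ℂ A lam + b * y)) :
    IsUnit (algebraMap ℂ A lam + b * y - a * y) := by
  obtain ⟨u, hu_eq⟩ := hu
  have h1 : (1 : A) - b * (y * ↑u⁻¹) = algebraMap ℂ A lam * ↑u⁻¹ := by
    calc (1 : A) - b * (y * ↑u⁻¹) = (↑u - b * y) * ↑u⁻¹ := by
          rw [sub_mul, Units.mul_inv, mul_assoc]
      _ = algebraMap ℂ A lam * ↑u⁻¹ := by
          rw [hu_eq, add_sub_cancel_right]
  have h2 : IsUnit ((1 : A) - b * (y * ↑u⁻¹)) := by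
    rw [h1]
    exact (hlam.isUnit.map (algebraMap ℂ A)).mul u⁻¹.isUnit
  have h3 : (1 : ℂ) ∉ spectrum ℂ (b * (y * ↑u⁻¹)) := by
    rw [spectrum.notMem_iff]
    simpa using h2
  rw [← h (y * ↑u⁻¹)] at h3
  have h4 : IsUnit ((1 : A) - a * (y * ↑u⁻¹)) := by
    have := spectrum.notMem_iff.mp h3
    simpa using this
  have h5 : ((1 : A) - a * (y * ↑u⁻¹)) * ↑u = algebraMap ℂ A lam + b * y - a * y := by
    rw [sub_mul, one_mul, mul_assoc, mul_assoc, Units.inv_mul, mul_one, hu_eq]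
  rw [← h5]
  exact h4.mul u.isUnit

/-- Theorem 2.6: In a unital C*-algebra, `σ(a x) = σ(b x)` for all `x`
implies `a = b`. -/
theorem eq_of_spectrum_mul_eq_cstar
    {A : Type*} [NormedRing A] [StarRing A] [CStarRing A] [CompleteSpace A]
    [NormedAlgebra ℂ A] [StarModule ℂ A]
    (a b : A)
    (h : ∀ x : A, spectrum ℂ (a * x) = spectrum ℂ (b * x)) :
    a = b := by
  letI : CStarAlgebra A := { }
  set d := a - b with hd
  -- positivity of the spectrum of `b * star b`
  have hpos : ∀ z : ℂ, z ∈ spectrum ℂ (b * star b) → z = z.re ∧ 0 ≤ z.re := by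
    intro z hz
    have hsa : IsSelfAdjoint (b * star b) := IsSelfAdjoint.mul_star_self b
    have hre : z = z.re := hsa.mem_spectrum_eq_re hz
    refine ⟨hre, ?_⟩
    have hz' : algebraMap ℝ ℂ z.re ∈ spectrum ℂ (b * star b) := by
      rw [show algebraMap ℝ ℂ z.re = (z.re : ℂ) from rfl, ← hre]
      exact hz
    have hmemR : z.re ∈ spectrum ℝ (b * star b) :=
      spectrum.of_algebraMap_mem ℂ hz'
    have := spectrum_star_mul_self_nonneg (b := star b) z.re
    rw [star_star] at this
    exact this hmemR
  -- Step B : `σ(d * star b) ⊆ {0}`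
  have hstep1 : ∀ z : ℂ, z ≠ 0 → IsUnit (algebraMap ℂ A z - d * star b) := by
    intro z hz
    by_cases hcase : IsUnit (algebraMap ℂ A z + b * star b)
    · have := aux_isUnit_transfer a b h (star b) z hz hcase
      have heq : algebraMap ℂ A z + b * star b - a * star b
          = algebraMap ℂ A z - d * star b := by
        rw [hd]; noncomm_ring
      rwa [heq] at this
    · have hmem : -z ∈ spectrum ℂ (b * star b) := by
        rw [spectrum.mem_iff]
        intro hU
        apply hcase
        have : -(algebraMap ℂ A (-z) - b * star b)
            = algebraMap ℂ A z + b * star b := by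
          rw [map_neg]; noncomm_ring
        rw [← this]
        exact hU.neg
      by_cases hcase2 : IsUnit (algebraMap ℂ A (-z) + a * star b)
      · have := aux_isUnit_transfer b a (fun x => (h x).symm) (star b) (-z)
          (neg_ne_zero.mpr hz) hcase2
        have heq : algebraMap ℂ A (-z) + a * star b - b * star b
            = -(algebraMap ℂ A z - d * star b) := by
          rw [hd, map_neg]; noncomm_ring
        rw [heq] at this
        exact (IsUnit.neg_iff _).mp this
      · have hmem2 : z ∈ spectrum ℂ (a * star b) := by
          rw [spectrum.mem_iff]
          intro hU
          apply hcase2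
          have : -(algebraMap ℂ A z - a * star b)
              = algebraMap ℂ A (-z) + a * star b := by
            rw [map_neg]; noncomm_ring
          rw [← this]
          exact hU.neg
        rw [h (star b)] at hmem2
        obtain ⟨e1, e2⟩ := hpos z hmem2
        obtain ⟨f1, f2⟩ := hpos (-z) hmem
        exfalso
        apply hz
        have hre0 : z.re = 0 := le_antisymm (by simpa using f2) e2
        rw [e1, hre0, Complex.ofReal_zero]
  -- transfer by star : `IsUnit (algebraMap ℂ A z + b * star d)` for `z ≠ 0`
  have hstep2 : ∀ z : ℂ, z ≠ 0 → IsUnit (algebraMap ℂ A z + b * star d) := by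
    intro z hz
    have h1 := hstep1 (-(starRingEnd ℂ z)) (by simpa using hz)
    have h2 : star (algebraMap ℂ A (-(starRingEnd ℂ z)) - d * star b)
        = -(algebraMap ℂ A z + b * star d) := by
      rw [star_sub, star_mul, star_star, map_neg, star_neg]
      rw [show star (algebraMap ℂ A (starRingEnd ℂ z)) = algebraMap ℂ A z by
        rw [← algebraMap_star_comm]; simp]
      noncomm_ring
    have := h1.star
    rw [h2] at this
    exact (IsUnit.neg_iff _).mp this
  -- Step C : `σ(d * star d) ⊆ {0}`
  have hstep3 : ∀ z : ℂ, z ≠ 0 → IsUnit (algebraMap ℂ A z - d * star d) := by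
    intro z hz
    have := aux_isUnit_transfer a b h (star d) z hz (hstep2 z hz)
    have heq : algebraMap ℂ A z + b * star d - a * star d
        = algebraMap ℂ A z - d * star d := by
      rw [hd]; noncomm_ring
    rwa [heq] at this
  have hsub : spectrum ℂ (d * star d) ⊆ {0} := by
    intro z hz
    by_contra hz0
    exact (spectrum.notMem_iff.mpr (hstep3 z hz0)) hz
  -- conclude `d = 0`
  have hrad : spectralRadius ℂ (d * star d) = 0 := by
    refine le_antisymm ?_ zero_le
    refine iSup₂_le fun k hk => ?_
    have : k = 0 := hsub hk
    simp [this]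
  have hnn : (‖d * star d‖₊ : ENNReal) = 0 := by
    rw [← (IsSelfAdjoint.mul_star_self d).spectralRadius_eq_nnnorm]
    exact hrad
  have hdd : d * star d = 0 := by
    have : ‖d * star d‖₊ = 0 := by exact_mod_cast hnn
    simpa [nnnorm_eq_zero] using this
  have hdnorm : ‖d‖ * ‖d‖ = 0 := by
    rw [← CStarRing.norm_self_mul_star, hdd, norm_zero]
  have hd0 : d = 0 := by
    have := mul_self_eq_zero.mp hdnorm
    exact norm_eq_zero.mp this
  have := sub_eq_zero.mp (hd ▸ hd0 : a - b = 0)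
  exact this
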